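/- Let Δ be a simplicial complex on vertex set {1,…,d} and for each maximal face (facet) a of Δ let J_a ⊆ ℤ[y₁^{±1},…,y_d^{±1}] be the ideal generated by {y_j − 1 : j ∉ a}. Then the intersection ⋂_a J_a over all facets a equals the ideal generated by the products ∏_{j∈σ}(1 − y_j) where σ ranges over the minimal non-faces of Δ, provided Δ is the simplicial complex dual to a homology polytope (i.e. every minimal non-face σ satisfies: σ is not contained in any facet). -/

import Mathlib

open AddMonoidAlgebra

/-- The Laurent polynomial ring `ℤ[y₁^{±1},…,y_d^{±1}]` in `d` variables. -/
abbrev LaurentRing (d : ℕ) := AddMonoidAlgebra ℤ (Fin d → ℤ)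

/-- The Laurent monomial `y_j`. -/
noncomputable def Yvar {d : ℕ} (j : Fin d) : LaurentRing d :=
  AddMonoidAlgebra.single (Pi.single j 1) 1

/-- The ideal `J_a = ⟨y_j − 1 : j ∉ a⟩`. -/
noncomputable def Jideal {d : ℕ} (a : Finset (Fin d)) : Ideal (LaurentRing d) :=
  Ideal.span {f : LaurentRing d | ∃ j ∉ a, f = Yvar j - 1}

/-- `a` is a facet (maximal face) of the simplicial complex `Δ`. -/
def IsFacet {d : ℕ} (Δ : Set (Finset (Fin d))) (a : Finset (Fin d)) : Prop :=
  a ∈ Δ ∧ ∀ b ∈ Δ, a ⊆ b → b = a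

/-- `σ` is a minimal non-face of `Δ`. -/
def IsMinNonFace {d : ℕ} (Δ : Set (Finset (Fin d))) (σ : Finset (Fin d)) : Prop :=
  σ ∉ Δ ∧ ∀ τ : Finset (Fin d), τ ⊂ σ → τ ∈ Δ

/-! ### Auxiliary machinery -/

noncomputable section AuxStmt9

open MvPolynomial

variable {d : ℕ}

/-- The inclusion of exponents `ℕ^d → ℤ^d`. -/
def expMap (d : ℕ) : (Fin d →₀ ℕ) →+ (Fin d → ℤ) where
  toFun m := fun j => (m j : ℤ)
  map_zero' := by funext j; simp
  map_add' m n := by funext j; simp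

lemma expMap_apply (m : Fin d →₀ ℕ) (j : Fin d) : expMap d m j = (m j : ℤ) := rfl

lemma expMap_injective : Function.Injective (expMap d) := by
  intro m n h
  ext j
  have : expMap d m j = expMap d n j := congrFun h j
  rw [expMap_apply, expMap_apply] at this
  exact_mod_cast this

/-- The canonical map `ℤ[x] → ℤ[y^{±1}]`, `x_j ↦ y_j`. -/
def Theta (d : ℕ) : MvPolynomial (Fin d) ℤ →ₐ[ℤ] LaurentRing d :=
  AddMonoidAlgebra.mapDomainAlgHom ℤ ℤ (expMap d)

lemma Theta_apply (p : MvPolynomial (Fin d) ℤ) :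
    Theta d p = AddMonoidAlgebra.mapDomain (expMap d) p := rfl

lemma Theta_injective : Function.Injective (Theta d) := by
  have : ⇑(Theta d) = AddMonoidAlgebra.mapDomain (expMap d) := by funext p; exact Theta_apply p
  rw [this]
  exact AddMonoidAlgebra.mapDomain_injective expMap_injective

lemma Theta_X (j : Fin d) : Theta d (X j) = Yvar j := by
  have hX : (X j : MvPolynomial (Fin d) ℤ) = AddMonoidAlgebra.single (Finsupp.single j 1) 1 := by
    rw [single_eq_monomial]; rfl
  rw [Theta_apply, hX, AddMonoidAlgebra.mapDomain_single]
  have : expMap d (Finsupp.single j 1) = Pi.single j 1 := by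
    funext k
    by_cases h : k = j
    · subst h; simp [expMap_apply]
    · simp [expMap_apply, Finsupp.single_apply, Pi.single_apply, h, Ne.symm h]
  rw [this]; rfl

/-- The substitution `x_j ↦ 1 - x_j`, an involution of `ℤ[x]`. -/
def Phi (d : ℕ) : MvPolynomial (Fin d) ℤ →ₐ[ℤ] MvPolynomial (Fin d) ℤ :=
  aeval (fun j => 1 - X j)

lemma Phi_Phi (p : MvPolynomial (Fin d) ℤ) : Phi d (Phi d p) = p := by
  have : (Phi d).comp (Phi d) = AlgHom.id ℤ _ := by
    apply MvPolynomial.algHom_ext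
    intro j
    simp [Phi]
  exact DFunLike.congr_fun this p

/-- The substitution `x_j ↦ 1 - y_j`. -/
def Psi (d : ℕ) : MvPolynomial (Fin d) ℤ →ₐ[ℤ] LaurentRing d :=
  aeval (fun j => 1 - Yvar j)

lemma Psi_eq : Psi d = (Theta d).comp (Phi d) := by
  apply MvPolynomial.algHom_ext
  intro j
  simp [Psi, Phi, Theta_X]

lemma Psi_injective : Function.Injective (Psi d) := by
  rw [Psi_eq]
  intro p q h
  have := Theta_injective (by simpa using h : Theta d (Phi d p) = Theta d (Phi d q))
  have := congrArg (Phi d) this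
  rwa [Phi_Phi, Phi_Phi] at this

/-- Zeroing out the coordinates outside `a`. -/
def projMap (a : Finset (Fin d)) : (Fin d → ℤ) →+ (Fin d → ℤ) where
  toFun v := fun j => if j ∈ a then v j else 0
  map_zero' := by funext j; simp
  map_add' v w := by funext j; by_cases h : j ∈ a <;> simp [h]

lemma projMap_apply (a : Finset (Fin d)) (v : Fin d → ℤ) (j : Fin d) :
    projMap a v j = if j ∈ a then v j else 0 := rfl

/-- The quotient map `ℤ[y^{±1}] → ℤ[y^{±1}]` sending `y_j ↦ 1` for `j ∉ a`. -/
def proj (a : Finset (Fin d)) : LaurentRing d →ₐ[ℤ] LaurentRing d :=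
  AddMonoidAlgebra.mapDomainAlgHom ℤ ℤ (projMap a)

lemma proj_single (a : Finset (Fin d)) (v : Fin d → ℤ) (c : ℤ) :
    proj a (AddMonoidAlgebra.single v c) = AddMonoidAlgebra.single (projMap a v) c := by
  show AddMonoidAlgebra.mapDomain (projMap a) _ = _
  rw [AddMonoidAlgebra.mapDomain_single]

lemma projMap_single (a : Finset (Fin d)) (j : Fin d) :
    projMap a (Pi.single j 1) = if j ∈ a then Pi.single j 1 else 0 := by
  by_cases h : j ∈ a
  · simp only [h, if_true]
    funext k
    rw [projMap_apply]
    by_cases hk : k = j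
    · subst hk; simp [h]
    · simp [Pi.single_apply, hk]
  · simp only [h, if_false]
    funext k
    rw [projMap_apply]
    by_cases hk : k ∈ a
    · have : k ≠ j := fun e => h (e ▸ hk)
      simp [hk, Pi.single_apply, this]
    · simp [hk]

lemma proj_Yvar (a : Finset (Fin d)) (j : Fin d) :
    proj a (Yvar j) = if j ∈ a then Yvar j else 1 := by
  rw [Yvar, proj_single, projMap_single]
  by_cases h : j ∈ a <;> simp [h, Yvar, AddMonoidAlgebra.one_def]

lemma proj_Jideal (a : Finset (Fin d)) {x : LaurentRing d} (hx : x ∈ Jideal a) :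
    proj a x = 0 := by
  have : Jideal a ≤ RingHom.ker (proj a).toRingHom := by
    rw [Jideal, Ideal.span_le]
    rintro f ⟨j, hj, rfl⟩
    simp [RingHom.mem_ker, map_sub, proj_Yvar, hj]
  exact this hx

lemma proj_Psi (a : Finset (Fin d)) (p : MvPolynomial (Fin d) ℤ) :
    proj a (Psi d p) = aeval (fun j => if j ∈ a then 1 - Yvar j else 0) p := by
  have : (proj a).comp (Psi d) =
      aeval (fun j => if j ∈ a then 1 - Yvar j else 0) := by
    apply MvPolynomial.algHom_ext
    intro j
    simp only [AlgHom.coe_comp, Function.comp_apply, Psi, aeval_X, map_sub, map_one, proj_Yvar]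
    by_cases h : j ∈ a <;> simp [h]
  exact DFunLike.congr_fun this p

open Classical in
/-- Restriction of a polynomial to those monomials whose exponent satisfies `P`. -/
def restr (P : (Fin d →₀ ℕ) → Prop) (q : MvPolynomial (Fin d) ℤ) :
    MvPolynomial (Fin d) ℤ :=
  ∑ m ∈ q.support.filter P, monomial m (coeff m q)

open Classical in
lemma coeff_restr (P : (Fin d →₀ ℕ) → Prop) (q : MvPolynomial (Fin d) ℤ)
    (m : Fin d →₀ ℕ) : coeff m (restr P q) = if P m then coeff m q else 0 := by
  rw [restr, MvPolynomial.coeff_sum]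
  rw [Finset.sum_congr rfl (fun m' _ => coeff_monomial m m' (coeff m' q))]
  rw [Finset.sum_ite_eq' (q.support.filter P) m (fun m' => coeff m' q)]
  by_cases hP : P m
  · by_cases hs : m ∈ q.support
    · simp [Finset.mem_filter, hs, hP]
    · simp only [Finset.mem_filter, hs, false_and, if_false, hP, if_true]
      exact (MvPolynomial.notMem_support_iff.mp hs).symm
  · simp [Finset.mem_filter, hP]

lemma restr_add_restr_not (P : (Fin d →₀ ℕ) → Prop) (q : MvPolynomial (Fin d) ℤ) :
    restr P q + restr (fun m => ¬ P m) q = q := by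
  apply MvPolynomial.ext
  intro m
  classical
  rw [MvPolynomial.coeff_add, coeff_restr, coeff_restr]
  by_cases hP : P m <;> simp [hP]

lemma mem_support_restr {P : (Fin d →₀ ℕ) → Prop} {q : MvPolynomial (Fin d) ℤ}
    {m : Fin d →₀ ℕ} (h : m ∈ (restr P q).support) : P m ∧ m ∈ q.support := by
  classical
  rw [MvPolynomial.mem_support_iff, coeff_restr] at h
  by_cases hP : P m
  · exact ⟨hP, MvPolynomial.mem_support_iff.mpr (by simpa [hP] using h)⟩
  · simp [hP] at h

lemma aeval_eq_zero_of_exists {S : Type*} [CommRing S] [Algebra ℤ S]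
    (g : Fin d → S) (m : Fin d →₀ ℕ) (c : ℤ)
    (h : ∃ j ∈ m.support, g j = 0) : aeval g (monomial m c) = 0 := by
  obtain ⟨j, hj, hg⟩ := h
  rw [aeval_monomial, Finsupp.prod]
  have : ∏ j ∈ m.support, g j ^ m j = 0 := by
    apply Finset.prod_eq_zero hj
    rw [hg, zero_pow]
    exact Finsupp.mem_support_iff.mp hj
  rw [this, mul_zero]

lemma aeval_congr_support {S : Type*} [CommRing S] [Algebra ℤ S]
    (g g' : Fin d → S) (q : MvPolynomial (Fin d) ℤ)
    (h : ∀ m ∈ q.support, ∀ j ∈ m.support, g j = g' j) :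
    aeval g q = aeval g' q := by
  conv_lhs => rw [as_sum q]
  conv_rhs => rw [as_sum q]
  rw [map_sum, map_sum]
  apply Finset.sum_congr rfl
  intro m hm
  rw [aeval_monomial, aeval_monomial, Finsupp.prod, Finsupp.prod]
  congr 1
  exact Finset.prod_congr rfl (fun j hj => by rw [h m hm j hj])

lemma proj_Psi_restr (a : Finset (Fin d)) (q : MvPolynomial (Fin d) ℤ) :
    proj a (Psi d q) = Psi d (restr (fun m => m.support ⊆ a) q) := by
  classical
  rw [proj_Psi]
  set g : Fin d → LaurentRing d := fun j => if j ∈ a then 1 - Yvar j else 0 with hg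
  conv_lhs => rw [← restr_add_restr_not (fun m => m.support ⊆ a) q]
  rw [map_add]
  have hA : aeval g (restr (fun m => m.support ⊆ a) q)
      = Psi d (restr (fun m => m.support ⊆ a) q) := by
    apply aeval_congr_support
    intro m hm j hj
    have hja : j ∈ a := (mem_support_restr hm).1 hj
    simp [hg, hja, Psi]
  have hB : aeval g (restr (fun m => ¬ m.support ⊆ a) q) = 0 := by
    conv_lhs => rw [as_sum (restr (fun m => ¬ m.support ⊆ a) q)]
    rw [map_sum]
    apply Finset.sum_eq_zero
    intro m hm
    have hmP : ¬ m.support ⊆ a := (mem_support_restr hm).1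
    obtain ⟨j, hj, hja⟩ := Finset.not_subset.mp hmP
    exact aeval_eq_zero_of_exists g m _ ⟨j, hj, by simp [hg, hja]⟩
  rw [hA, hB, add_zero]

lemma exists_minNonFace (Δ : Set (Finset (Fin d))) :
    ∀ τ : Finset (Fin d), τ ∉ Δ → ∃ σ, σ ⊆ τ ∧ IsMinNonFace Δ σ := by
  intro τ
  induction' τ using Finset.strongInductionOn with τ ih
  intro hτ
  by_cases h : ∀ τ' : Finset (Fin d), τ' ⊂ τ → τ' ∈ Δ
  · exact ⟨τ, subset_rfl, hτ, h⟩
  · push_neg at h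
    obtain ⟨τ', hsub, hτ'⟩ := h
    obtain ⟨σ, hσ, hmin⟩ := ih τ' hsub hτ'
    exact ⟨σ, hσ.trans hsub.subset, hmin⟩

lemma psi_monomial_factor (m : Fin d →₀ ℕ) (c : ℤ) (σ : Finset (Fin d))
    (hσ : σ ⊆ m.support) :
    ∃ r : LaurentRing d,
      Psi d (monomial m c) = (∏ j ∈ σ, (1 - Yvar j)) * r := by
  refine ⟨(c : LaurentRing d) * ((∏ j ∈ m.support \ σ, (1 - Yvar j) ^ m j) *
    ∏ j ∈ σ, (1 - Yvar j) ^ (m j - 1)), ?_⟩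
  rw [Psi, aeval_monomial, Finsupp.prod]
  have h2 : ∏ j ∈ σ, (1 - Yvar j) ^ m j =
      (∏ j ∈ σ, (1 - Yvar j)) * ∏ j ∈ σ, (1 - Yvar j) ^ (m j - 1) := by
    rw [← Finset.prod_mul_distrib]
    refine Finset.prod_congr rfl (fun j hj => ?_)
    have hne : m j ≠ 0 := Finsupp.mem_support_iff.mp (hσ hj)
    conv_lhs => rw [← Nat.succ_pred_eq_of_pos (Nat.pos_of_ne_zero hne)]
    rw [pow_succ']
    rfl
  have h3 : ∏ j ∈ m.support, (1 - Yvar j) ^ m j =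
      (∏ j ∈ m.support \ σ, (1 - Yvar j) ^ m j) * ∏ j ∈ σ, (1 - Yvar j) ^ m j :=
    (Finset.prod_sdiff hσ).symm
  rw [h3, h2]
  have : (algebraMap ℤ (LaurentRing d)) c = (c : LaurentRing d) := by
    simp [algebraMap_int_eq, eq_intCast]
  rw [this]
  ring

lemma single_unit_cancel (N : Fin d → ℤ) (f : LaurentRing d) :
    AddMonoidAlgebra.single (-N) 1 * (AddMonoidAlgebra.single N 1 * f) = f := by
  rw [← mul_assoc, AddMonoidAlgebra.single_mul_single, neg_add_cancel, one_mul]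
  rw [← AddMonoidAlgebra.one_def, one_mul]

lemma exists_poly_of_nonneg (g : LaurentRing d)
    (h : ∀ v ∈ g.coeff.support, ∀ j, 0 ≤ v j) :
    ∃ p : MvPolynomial (Fin d) ℤ, Psi d p = g := by
  have hrange : g ∈ (Theta d).range := by
    have hg : g = ∑ v ∈ g.coeff.support, AddMonoidAlgebra.single v (g.coeff v) :=
      (AddMonoidAlgebra.sum_coeff_single g).symm
    rw [hg]
    apply Subalgebra.sum_mem
    intro v hv
    set m : Fin d →₀ ℕ := Finsupp.equivFunOnFinite.symm (fun j => (v j).toNat) with hmdef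
    have hm : expMap d m = v := by
      funext j
      show (((v j).toNat : ℕ) : ℤ) = v j
      exact Int.toNat_of_nonneg (h v hv j)
    refine ⟨AddMonoidAlgebra.single m (g.coeff v), ?_⟩
    show Theta d (AddMonoidAlgebra.single m (g.coeff v)) = _
    rw [Theta_apply, AddMonoidAlgebra.mapDomain_single, hm]
  obtain ⟨q, hq⟩ := hrange
  have hq' : Theta d q = g := hq
  refine ⟨Phi d q, ?_⟩
  rw [Psi_eq]
  show Theta d (Phi d (Phi d q)) = g
  rw [Phi_Phi, hq']

lemma exists_shift (f : LaurentRing d) :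
    ∃ (N : Fin d → ℤ) (p : MvPolynomial (Fin d) ℤ),
      AddMonoidAlgebra.single N 1 * f = Psi d p := by
  set N : Fin d → ℤ := fun j => ((f.coeff.support.sup fun x => (-x j).toNat : ℕ) : ℤ) with hN
  have h : ∀ v ∈ (AddMonoidAlgebra.single N 1 * f).coeff.support, ∀ j, 0 ≤ v j := by
    intro v hv j
    have happ : (AddMonoidAlgebra.single N 1 * f : LaurentRing d).coeff v
        = f.coeff (-N + v) := by simpa using AddMonoidAlgebra.coeff_single_mul_apply f 1 N v
    have hne : f.coeff (-N + v) ≠ 0 := by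
      intro h0
      exact (Finsupp.mem_support_iff.mp hv) (happ.trans h0)
    have hsup : (-N + v) ∈ f.coeff.support := Finsupp.mem_support_iff.mpr hne
    have h1 : (-(-N + v) j).toNat ≤ f.coeff.support.sup fun x => (-x j).toNat :=
      Finset.le_sup (f := fun x => (-x j).toNat) hsup
    have h2 : -(-N + v) j ≤ N j := by
      show -(-N + v) j ≤ ((f.coeff.support.sup fun x => (-x j).toNat : ℕ) : ℤ)
      exact le_trans (Int.self_le_toNat _) (by exact_mod_cast h1)
    have h3 : (-N + v) j = -N j + v j := rfl
    linarith [h2, h3]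
  obtain ⟨p, hp⟩ := exists_poly_of_nonneg _ h
  exact ⟨N, p, hp.symm⟩

end AuxStmt9

/-- For a simplicial complex `Δ` on `{1,…,d}` (dual to a homology polytope, so
that no minimal non-face is contained in a facet), the intersection of the
ideals `J_a = ⟨y_j − 1 : j ∉ a⟩` over all facets `a` equals the ideal generated
by the products `∏_{j∈σ}(1 − y_j)` over all minimal non-faces `σ`. -/
theorem stmt_9 (d : ℕ) (Δ : Set (Finset (Fin d)))
    (hlower : ∀ a ∈ Δ, ∀ b : Finset (Fin d), b ⊆ a → b ∈ Δ)
    (hmem : ∅ ∈ Δ)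
    (hfacet : ∀ a ∈ Δ, ∃ b : Finset (Fin d), IsFacet Δ b ∧ a ⊆ b)
    (hdual : ∀ σ : Finset (Fin d), IsMinNonFace Δ σ →
      ∀ a : Finset (Fin d), IsFacet Δ a → ¬ σ ⊆ a) :
    (⨅ a ∈ {a : Finset (Fin d) | IsFacet Δ a}, Jideal a) =
      Ideal.span {f : LaurentRing d |
        ∃ σ : Finset (Fin d), IsMinNonFace Δ σ ∧ f = ∏ j ∈ σ, (1 - Yvar j)} := by
  classical
  set I : Ideal (LaurentRing d) := Ideal.span {f : LaurentRing d |
    ∃ σ : Finset (Fin d), IsMinNonFace Δ σ ∧ f = ∏ j ∈ σ, (1 - Yvar j)} with hI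
  set K : Ideal (LaurentRing d) := ⨅ a ∈ {a : Finset (Fin d) | IsFacet Δ a}, Jideal a with hK
  have hmemK : ∀ x : LaurentRing d, x ∈ K ↔ ∀ a : Finset (Fin d), IsFacet Δ a → x ∈ Jideal a := by
    intro x
    rw [hK]
    constructor
    · intro hx a ha
      have := (Submodule.mem_iInf _).mp hx a
      exact (Submodule.mem_iInf _).mp this ha
    · intro hx
      rw [Submodule.mem_iInf]
      intro a
      rw [Submodule.mem_iInf]
      intro ha
      exact hx a ha
  have hIle : I ≤ K := by
    rw [hI, Ideal.span_le]
    rintro f ⟨σ, hσ, rfl⟩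
    rw [SetLike.mem_coe, hmemK]
    intro a ha
    obtain ⟨j, hjσ, hja⟩ := Finset.not_subset.mp (hdual σ hσ a ha)
    rw [← Finset.mul_prod_erase σ _ hjσ]
    apply Ideal.mul_mem_right
    have h1 : Yvar j - 1 ∈ Jideal a := Ideal.subset_span ⟨j, hja, rfl⟩
    have := (Jideal a).neg_mem h1
    rwa [neg_sub] at this
  refine le_antisymm ?_ hIle
  intro f hf
  obtain ⟨N, p, hp⟩ := exists_shift f
  set P : (Fin d →₀ ℕ) → Prop := fun m => (m.support : Finset (Fin d)) ∈ Δ with hPdef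
  have hsplit := restr_add_restr_not P p
  have h2 : Psi d (restr (fun m => ¬ P m) p) ∈ I := by
    rw [MvPolynomial.as_sum (restr (fun m => ¬ P m) p), map_sum]
    apply Ideal.sum_mem
    intro m hm
    have hmP : ¬ P m := (mem_support_restr hm).1
    obtain ⟨σ, hσsub, hσ⟩ := exists_minNonFace Δ m.support hmP
    obtain ⟨r, hr⟩ := psi_monomial_factor m _ σ hσsub
    rw [hr]
    exact Ideal.mul_mem_right r _ (Ideal.subset_span ⟨σ, hσ, rfl⟩)
  have huf : AddMonoidAlgebra.single N 1 * f ∈ K := Ideal.mul_mem_left _ _ hf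
  have h1 : Psi d (restr P p) ∈ K := by
    have hadd : Psi d (restr P p) + Psi d (restr (fun m => ¬ P m) p)
        = AddMonoidAlgebra.single N 1 * f := by
      rw [← map_add, hsplit, hp]
    rw [eq_sub_of_add_eq hadd]
    exact Submodule.sub_mem _ huf (hIle h2)
  have hzero : restr P p = 0 := by
    apply MvPolynomial.ext
    intro m
    rw [MvPolynomial.coeff_zero]
    by_cases hm : m ∈ (restr P p).support
    swap
    · exact MvPolynomial.notMem_support_iff.mp hm
    · obtain ⟨hPm, hmp⟩ := mem_support_restr hm
      obtain ⟨a, ha, hsub⟩ := hfacet m.support hPm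
      have hJa : Psi d (restr P p) ∈ Jideal a := (hmemK _).mp h1 a ha
      have h0 : proj a (Psi d (restr P p)) = 0 := proj_Jideal a hJa
      rw [proj_Psi_restr] at h0
      have hres : restr (fun m => m.support ⊆ a) (restr P p) = 0 :=
        Psi_injective (h0.trans (map_zero (Psi d)).symm)
      have hc := congrArg (MvPolynomial.coeff m) hres
      rw [coeff_restr, MvPolynomial.coeff_zero] at hc
      simpa [hsub] using hc
  have hpI : Psi d p ∈ I := by
    have : Psi d p = Psi d (restr (fun m => ¬ P m) p) := by
      conv_lhs => rw [← hsplit]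
      rw [map_add, hzero, map_zero, zero_add]
    rw [this]
    exact h2
  have hf' : f = AddMonoidAlgebra.single (-N) 1 * (AddMonoidAlgebra.single N 1 * f) :=
    (single_unit_cancel N f).symm
  rw [hI] at hpI ⊢
  rw [hf', hp]
  exact Ideal.mul_mem_left _ _ hpI
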